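/- Let q = 2^h and let σ : x ↦ x^{2^e} be a field automorphism of F_q with gcd(e, h) = 1. Then the set {(1, t, t^σ) : t ∈ F_q} ∪ {(0,0,1), (0,1,0)} is an arc of size q+2 in PG(2, q), i.e., no three of these points are collinear. -/

import Mathlib

set_option linter.unusedSectionVars false
set_option maxHeartbeats 1000000

section Aux

variable {F : Type*} [Field F] [Fintype F]

lemma char2_of_card {h : ℕ} (hh : 0 < h) (hcard : Fintype.card F = 2 ^ h) : CharP F 2 := by
  have h2 : ((2 : ℕ) : F) = 0 := by
    have := FiniteField.cast_card_eq_zero F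
    rw [hcard] at this
    push_cast at this
    exact pow_eq_zero_iff hh.ne' |>.mp this
  exact (CharP.charP_iff_prime_eq_zero Nat.prime_two).mpr (by exact_mod_cast h2)

lemma iter_fixed {x : F} {m : ℕ} (hx : x ^ 2 ^ m = x) (k : ℕ) : x ^ 2 ^ (k * m) = x := by
  induction k with
  | zero => simp
  | succ n ih =>
    have : 2 ^ ((n + 1) * m) = 2 ^ (n * m) * 2 ^ m := by ring
    rw [this, pow_mul, ih, hx]

lemma fixed_is_01 {h e : ℕ} (hh : 0 < h) (hcard : Fintype.card F = 2 ^ h)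
    (hgcd : Nat.gcd e h = 1) {x : F} (hx : x ^ 2 ^ e = x) : x = 0 ∨ x = 1 := by
  have hsq : x ^ 2 = x := by
    rcases eq_or_lt_of_le (show 1 ≤ h from hh) with h1 | h1
    · have := FiniteField.pow_card x
      rwa [hcard, ← h1, pow_one] at this
    · have hcop : Nat.Coprime e h := hgcd
      obtain ⟨m, -, hm⟩ := Nat.exists_mul_mod_eq_one_of_coprime hcop h1
      have hxh : x ^ 2 ^ h = x := by
        have := FiniteField.pow_card x
        rwa [hcard] at this
      have h2' : x ^ 2 ^ (e * m) = x := by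
        rw [Nat.mul_comm]; exact iter_fixed hx m
      have hdiv : e * m = h * (e * m / h) + 1 := by
        conv_lhs => rw [← Nat.div_add_mod (e * m) h, hm]
      rw [hdiv] at h2'
      have : x ^ 2 ^ (h * (e * m / h) + 1) = (x ^ 2 ^ ((e * m / h) * h)) ^ 2 := by
        rw [← pow_mul, ← pow_succ, Nat.mul_comm h]
      rw [this, iter_fixed hxh] at h2'
      exact h2'
  have : x * (x - 1) = 0 := by rw [mul_sub, mul_one, ← sq, hsq, sub_self]
  rcases mul_eq_zero.mp this with h0 | h0
  · exact Or.inl h0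
  · exact Or.inr (by linear_combination h0)

lemma li_of_det {u v w : Fin 3 → F} (hd : (Matrix.of ![u, v, w]).det ≠ 0) :
    LinearIndependent F ![u, v, w] :=
  Matrix.linearIndependent_rows_iff_isUnit.mpr
    ((Matrix.isUnit_iff_isUnit_det _).mpr (isUnit_iff_ne_zero.mpr hd))

lemma li_swap12 {u v w : Fin 3 → F} (hl : LinearIndependent F ![u, v, w]) :
    LinearIndependent F ![v, u, w] := by
  have : ![v, u, w] = ![u, v, w] ∘ (Equiv.swap (0 : Fin 3) 1) := by
    funext i; fin_cases i <;> simp [Equiv.swap_apply_def]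
  rw [this]
  exact (linearIndependent_equiv _).mpr hl

lemma li_swap23 {u v w : Fin 3 → F} (hl : LinearIndependent F ![u, v, w]) :
    LinearIndependent F ![u, w, v] := by
  have : ![u, w, v] = ![u, v, w] ∘ (Equiv.swap (1 : Fin 3) 2) := by
    funext i; fin_cases i <;> simp [Equiv.swap_apply_def]
  rw [this]
  exact (linearIndependent_equiv _).mpr hl

lemma li_rot {u v w : Fin 3 → F} (hl : LinearIndependent F ![u, v, w]) :
    LinearIndependent F ![v, w, u] := li_swap23 (li_swap12 hl)

-- core case lemmas; P t = ![1, t, t ^ 2 ^ e]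
lemma L4 {e : ℕ} (t : F) :
    LinearIndependent F ![![1, t, t ^ 2 ^ e], ![0, 0, 1], ![0, 1, 0]] := by
  apply li_of_det
  rw [Matrix.det_fin_three]
  simp [Matrix.vecHead, Matrix.vecTail]

lemma L2 {e : ℕ} {t1 t2 : F} (hne : t1 ≠ t2) :
    LinearIndependent F ![![1, t1, t1 ^ 2 ^ e], ![1, t2, t2 ^ 2 ^ e], ![0, 0, 1]] := by
  apply li_of_det
  rw [Matrix.det_fin_three]
  simp only [Matrix.of_apply, Matrix.cons_val', Matrix.cons_val_zero, Matrix.cons_val_one,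
    Matrix.head_cons, Matrix.cons_val_two, Matrix.tail_cons, Matrix.head_fin_const,
    Matrix.empty_val']
  intro hd
  exact hne (by linear_combination -hd)

lemma frob_inj {h e : ℕ} (hh : 0 < h) (hcard : Fintype.card F = 2 ^ h) {t1 t2 : F}
    (hne : t1 ≠ t2) : t1 ^ 2 ^ e ≠ t2 ^ 2 ^ e := by
  haveI := char2_of_card hh hcard
  intro hEq
  apply hne
  have hsub : (t1 - t2) ^ 2 ^ e = 0 := by
    rw [sub_pow_char_pow, hEq, sub_self]
  have := pow_eq_zero_iff (n := 2 ^ e) (Nat.pos_of_ne_zero (by positivity)).ne' |>.mp hsub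
  linear_combination this

lemma L3 {h e : ℕ} (hh : 0 < h) (hcard : Fintype.card F = 2 ^ h) {t1 t2 : F} (hne : t1 ≠ t2) :
    LinearIndependent F ![![1, t1, t1 ^ 2 ^ e], ![1, t2, t2 ^ 2 ^ e], ![0, 1, 0]] := by
  apply li_of_det
  rw [Matrix.det_fin_three]
  simp only [Matrix.of_apply, Matrix.cons_val', Matrix.cons_val_zero, Matrix.cons_val_one,
    Matrix.head_cons, Matrix.cons_val_two, Matrix.tail_cons]
  intro hd
  exact frob_inj hh hcard hne (by linear_combination hd)

lemma L1 {h e : ℕ} (hh : 0 < h) (hcard : Fintype.card F = 2 ^ h) (hgcd : Nat.gcd e h = 1)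
    {t1 t2 t3 : F} (h12 : t1 ≠ t2) (h13 : t1 ≠ t3) (h23 : t2 ≠ t3) :
    LinearIndependent F
      ![![1, t1, t1 ^ 2 ^ e], ![1, t2, t2 ^ 2 ^ e], ![1, t3, t3 ^ 2 ^ e]] := by
  haveI := char2_of_card hh hcard
  apply li_of_det
  rw [Matrix.det_fin_three]
  simp only [Matrix.of_apply, Matrix.cons_val', Matrix.cons_val_zero, Matrix.cons_val_one,
    Matrix.head_cons, Matrix.cons_val_two, Matrix.tail_cons]
  intro hd
  set a : F := t2 - t1 with ha
  set b : F := t3 - t1 with hb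
  have ha0 : a ≠ 0 := sub_ne_zero.mpr (Ne.symm h12)
  have hb0 : b ≠ 0 := sub_ne_zero.mpr (Ne.symm h13)
  have haσ : a ^ 2 ^ e = t2 ^ 2 ^ e - t1 ^ 2 ^ e := by rw [ha, sub_pow_char_pow]
  have hbσ : b ^ 2 ^ e = t3 ^ 2 ^ e - t1 ^ 2 ^ e := by rw [hb, sub_pow_char_pow]
  have key : a * b ^ 2 ^ e = b * a ^ 2 ^ e := by
    rw [haσ, hbσ, ha, hb]; linear_combination hd
  have hc : (b / a) ^ 2 ^ e = b / a := by
    rw [div_pow, div_eq_div_iff (pow_ne_zero _ ha0) ha0]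
    linear_combination key
  rcases fixed_is_01 hh hcard hgcd hc with h0 | h0
  · exact absurd h0 (div_ne_zero hb0 ha0)
  · have : b = a := by
      have := (div_eq_one_iff_eq ha0).mp h0
      exact this
    exact h23 (by rw [ha, hb] at this; linear_combination -this)

lemma tne {h e : ℕ} (hh : 0 < h) (hcard : Fintype.card F = 2 ^ h) {t1 t2 : F}
    (hne : ![(1:F), t1, t1 ^ 2 ^ e] ≠ ![1, t2, t2 ^ 2 ^ e]) : t1 ≠ t2 :=
  fun he => hne (by rw [he])

end Aux

theorem translation_hyperoval_is_arc {F : Type*} [Field F] [Fintype F] (h e : ℕ)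
    (hh : 0 < h) (hcard : Fintype.card F = 2 ^ h) (hgcd : Nat.gcd e h = 1)
    (S : Set (Fin 3 → F))
    (hS : S = {v | ∃ t : F, v = ![1, t, t ^ 2 ^ e]} ∪ {![0, 0, 1], ![0, 1, 0]}) :
    S.ncard = 2 ^ h + 2 ∧
      ∀ u ∈ S, ∀ v ∈ S, ∀ w ∈ S, u ≠ v → u ≠ w → v ≠ w →
        LinearIndependent F ![u, v, w] := by
  constructor
  · -- cardinality
    have hT : {v : Fin 3 → F | ∃ t : F, v = ![1, t, t ^ 2 ^ e]}
        = Set.range (fun t : F => ![1, t, t ^ 2 ^ e]) := by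
      ext v; simp [Set.mem_setOf_eq, Set.mem_range, eq_comm]
    have hinj : Function.Injective (fun t : F => ![1, t, t ^ 2 ^ e]) := by
      intro a b hab
      have := congr_fun hab 1
      simpa using this
    have hdisj : Disjoint {v : Fin 3 → F | ∃ t : F, v = ![1, t, t ^ 2 ^ e]}
        ({![0, 0, 1], ![0, 1, 0]} : Set (Fin 3 → F)) := by
      rw [Set.disjoint_left]
      rintro v ⟨t, rfl⟩ hv
      rcases hv with hv | hv <;>
      · have := congr_fun hv 0; simp at this
    rw [hS, Set.ncard_union_eq hdisj (by rw [hT]; exact (Set.finite_range _)) (Set.toFinite _)]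
    have h1 : {v : Fin 3 → F | ∃ t : F, v = ![1, t, t ^ 2 ^ e]}.ncard = 2 ^ h := by
      rw [hT, ← Nat.card_coe_set_eq, Nat.card_range_of_injective hinj,
        Nat.card_eq_fintype_card, hcard]
    have h2 : ({![0, 0, 1], ![0, 1, 0]} : Set (Fin 3 → F)).ncard = 2 := by
      apply Set.ncard_pair
      intro hAB
      have := congr_fun hAB 1
      simp at this
    rw [h1, h2]
  · intro u hu v hv w hw huv huw hvw
    rw [hS] at hu hv hw
    simp only [Set.mem_union, Set.mem_setOf_eq, Set.mem_insert_iff, Set.mem_singleton_iff]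
      at hu hv hw
    rcases hu with ⟨t1, rfl⟩ | rfl | rfl
    · rcases hv with ⟨t2, rfl⟩ | rfl | rfl
      · rcases hw with ⟨t3, rfl⟩ | rfl | rfl
        · exact L1 hh hcard hgcd (tne hh hcard huv) (tne hh hcard huw) (tne hh hcard hvw)
        · exact L2 (tne hh hcard huv)
        · exact L3 hh hcard (tne hh hcard huv)
      · rcases hw with ⟨t3, rfl⟩ | rfl | rfl
        · exact li_swap23 (L2 (tne hh hcard huw))
        · exact absurd rfl hvw
        · exact L4 _
      · rcases hw with ⟨t3, rfl⟩ | rfl | rfl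
        · exact li_swap23 (L3 hh hcard (tne hh hcard huw))
        · exact li_swap23 (L4 _)
        · exact absurd rfl hvw
    · rcases hv with ⟨t2, rfl⟩ | rfl | rfl
      · rcases hw with ⟨t3, rfl⟩ | rfl | rfl
        · exact li_rot (li_rot (L2 (tne hh hcard hvw)))
        · exact absurd rfl huw
        · exact li_swap12 (L4 _)
      · exact absurd rfl huv
      · rcases hw with ⟨t3, rfl⟩ | rfl | rfl
        · exact li_rot (L4 _)
        · exact absurd rfl huw
        · exact absurd rfl hvw
    · rcases hv with ⟨t2, rfl⟩ | rfl | rfl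
      · rcases hw with ⟨t3, rfl⟩ | rfl | rfl
        · exact li_rot (li_rot (L3 hh hcard (tne hh hcard hvw)))
        · exact li_rot (li_rot (L4 _))
        · exact absurd rfl huw
      · rcases hw with ⟨t3, rfl⟩ | rfl | rfl
        · exact li_swap12 (li_rot (L4 _))
        · exact absurd rfl hvw
        · exact absurd rfl huw
      · exact absurd rfl huv
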